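/- Let $0 < \rho_1 \le \rho_2 < 1$ and fix $i$. Suppose $y_1,\dots,y_n$ are unit vectors with $\rho_1 \le \langle y_i, y_k\rangle \le \rho_2$ for $k \ne i$, let $\beta > 0$ and $Z_i = \sum_{k=1}^n e^{\beta\langle y_i, y_k\rangle}$. If $\beta = \gamma\log n$ with $\gamma > \frac{1}{1-\rho_2}$, then $\left|Z_i e^{-\beta} - 1\right| \le n^{\gamma\rho_2 + 1 - \gamma}$, and the exponent $\gamma\rho_2 + 1 - \gamma$ is negative. -/
import Mathlib


open scoped RealInnerProductSpace BigOperators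

theorem stmt19 (ρ₁ ρ₂ γ : ℝ) (h1 : 0 < ρ₁) (h12 : ρ₁ ≤ ρ₂) (h2 : ρ₂ < 1)
    (hγ : 1 / (1 - ρ₂) < γ)
    (n d : ℕ) (y : Fin n → EuclideanSpace ℝ (Fin d)) (i : Fin n)
    (hunit : ∀ k, ‖y k‖ = 1)
    (hbound : ∀ k : Fin n, k ≠ i → ρ₁ ≤ ⟪y i, y k⟫ ∧ ⟪y i, y k⟫ ≤ ρ₂) :
    |(∑ k, Real.exp ((γ * Real.log n) * ⟪y i, y k⟫)) *
        Real.exp (-(γ * Real.log n)) - 1|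
      ≤ (n : ℝ) ^ (γ * ρ₂ + 1 - γ) ∧ γ * ρ₂ + 1 - γ < 0 := by
  have hρ : 0 < 1 - ρ₂ := by linarith
  have hγ1 : 1 < γ * (1 - ρ₂) := by
    rw [div_lt_iff₀ hρ] at hγ; linarith
  have hexp : γ * ρ₂ + 1 - γ < 0 := by nlinarith
  refine ⟨?_, hexp⟩
  have hγpos : 0 < γ := by nlinarith
  have hn : 0 < n := i.pos
  have hn1 : (1 : ℝ) ≤ (n : ℝ) := by exact_mod_cast hn
  have hlog : 0 ≤ Real.log n := Real.log_nonneg hn1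
  set β := γ * Real.log n with hβ
  have hself : ⟪y i, y i⟫ = 1 := by
    rw [real_inner_self_eq_norm_sq, hunit]; norm_num
  have hrw : (∑ k, Real.exp (β * ⟪y i, y k⟫)) * Real.exp (-β)
      = 1 + ∑ k ∈ Finset.univ.erase i, Real.exp (β * ⟪y i, y k⟫ - β) := by
    rw [Finset.sum_mul]
    rw [← Finset.add_sum_erase _ _ (Finset.mem_univ i)]
    congr 1
    · rw [hself, ← Real.exp_add]; ring_nf; exact Real.exp_zero
    · exact Finset.sum_congr rfl fun k _ => by rw [← Real.exp_add]; ring_nf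
  rw [hrw]
  have hterm : ∀ k ∈ Finset.univ.erase i,
      Real.exp (β * ⟪y i, y k⟫ - β) ≤ (n : ℝ) ^ (γ * (ρ₂ - 1)) := by
    intro k hk
    have hk' := (hbound k (Finset.mem_erase.mp hk).1).2
    rw [Real.rpow_def_of_pos (by exact_mod_cast hn)]
    apply Real.exp_le_exp.mpr
    have : β * ⟪y i, y k⟫ - β = Real.log n * (γ * (⟪y i, y k⟫ - 1)) := by
      rw [hβ]; ring
    rw [this]
    apply mul_le_mul_of_nonneg_left _ hlog
    apply mul_le_mul_of_nonneg_left _ hγpos.le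
    linarith
  have hsum : ∑ k ∈ Finset.univ.erase i, Real.exp (β * ⟪y i, y k⟫ - β)
      ≤ (n : ℝ) * (n : ℝ) ^ (γ * (ρ₂ - 1)) := by
    calc ∑ k ∈ Finset.univ.erase i, Real.exp (β * ⟪y i, y k⟫ - β)
        ≤ ∑ _k ∈ Finset.univ.erase i, (n : ℝ) ^ (γ * (ρ₂ - 1)) :=
          Finset.sum_le_sum hterm
      _ = ((Finset.univ.erase i).card : ℝ) * (n : ℝ) ^ (γ * (ρ₂ - 1)) := by
          rw [Finset.sum_const, nsmul_eq_mul]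
      _ ≤ (n : ℝ) * (n : ℝ) ^ (γ * (ρ₂ - 1)) := by
          apply mul_le_mul_of_nonneg_right _ (Real.rpow_nonneg (by positivity) _)
          exact_mod_cast (Finset.card_erase_le.trans (by simp))
  have hpos : 0 ≤ ∑ k ∈ Finset.univ.erase i, Real.exp (β * ⟪y i, y k⟫ - β) :=
    Finset.sum_nonneg fun k _ => (Real.exp_pos _).le
  rw [abs_of_nonneg (by linarith)]
  have : (n : ℝ) * (n : ℝ) ^ (γ * (ρ₂ - 1)) = (n : ℝ) ^ (γ * ρ₂ + 1 - γ) := by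
    rw [show γ * ρ₂ + 1 - γ = 1 + γ * (ρ₂ - 1) by ring,
      Real.rpow_add (by exact_mod_cast hn), Real.rpow_one]
  linarith [this ▸ hsum]
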